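/- arXiv:1601.07290 — 3 statements merged into one kernel-verified Lean document; each statement's English description precedes it below -/
import Mathlib

section
/- Let D ≥ 3, μ ≠ 0, and consider the ideal photon gas with h(n) = (kγ/(γ-1)) n^{γ-1}, γ = D/(D-1), k > 0, on a metric function f positive and twice differentiable. At a critical point (r_c, n_c) (so r_c f'(r_c) = 2 f(r_c) and n_c = sqrt((D-2)/f(r_c))·|μ|/r_c^{D-2}), the determinant of the linearization matrix of the system (ṙ, ṅ) = (∂_n F, -∂_r F), F(r,n) = h(n)²(f(r) + μ²/(r^{2(D-2)} n²)), is negative if and only if (f r⁻²)''(r_c) < 0. -/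
set_option maxHeartbeats 1600000 in
/-- At a critical point of ideal photon gas accretion, the determinant of the
linearization matrix is negative iff (f r⁻²)''(r_c) < 0 (unstable photon sphere ↔ saddle). -/
theorem photon_gas_saddle_iff_unstable (D : ℕ) (hD : 3 ≤ D) (μ k : ℝ) (hμ : μ ≠ 0)
    (hk : 0 < k) (γ : ℝ) (hγ : γ = (D : ℝ) / ((D : ℝ) - 1))
    (h : ℝ → ℝ) (hh : ∀ n, h n = k * γ / (γ - 1) * n ^ (γ - 1))
    (f : ℝ → ℝ) (r_c n_c : ℝ) (hr : 0 < r_c)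
    (hfd : ContDiffAt ℝ 2 f r_c) (hfpos : 0 < f r_c)
    (hcrit : r_c * deriv f r_c = 2 * f r_c)
    (hn : n_c = Real.sqrt (((D : ℝ) - 2) / f r_c) * |μ| / r_c ^ (D - 2))
    (F : ℝ → ℝ → ℝ)
    (hF : ∀ r n, F r n = h n ^ 2 * (f r + μ ^ 2 / (r ^ (2 * (D - 2)) * n ^ 2)))
    (M : Matrix (Fin 2) (Fin 2) ℝ)
    (hM : M = !![deriv (fun r => deriv (fun n => F r n) n_c) r_c,
                 deriv (deriv (fun n => F r_c n)) n_c;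
                 -(deriv (deriv (fun r => F r n_c)) r_c),
                 -(deriv (fun r => deriv (fun n => F r n) n_c) r_c)]) :
    M.det < 0 ↔ deriv (deriv (fun r => f r / r ^ 2)) r_c < 0 := by
  -- numeric setup
  have hD3 : (3:ℝ) ≤ (D:ℝ) := by exact_mod_cast hD
  have hd1 : (0:ℝ) < (D:ℝ) - 1 := by linarith
  have hd2 : (0:ℝ) < (D:ℝ) - 2 := by linarith
  have hγ1 : γ - 1 = 1 / ((D:ℝ) - 1) := by rw [hγ]; field_simp; ring
  have hγ1pos : 0 < γ - 1 := by rw [hγ1]; positivity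
  have hγpos : 0 < γ := by linarith
  set c : ℝ := k * γ / (γ - 1) with hc
  have hcpos : 0 < c := by positivity
  set s : ℝ := 2 * (γ - 1) with hs
  have hsv : s = 2 / ((D:ℝ) - 1) := by rw [hs, hγ1]; ring
  set m : ℕ := 2 * (D - 2) with hm
  have hmc : ((m:ℕ):ℝ) = 2 * ((D:ℝ) - 2) := by
    rw [hm]; push_cast [Nat.cast_sub (by omega : 2 ≤ D)]; ring
  have hncpos : 0 < n_c := by
    rw [hn]
    exact div_pos (mul_pos (Real.sqrt_pos.mpr (by positivity)) (abs_pos.mpr hμ))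
      (by positivity)
  have hrm : (r_c:ℝ) ^ m ≠ 0 := pow_ne_zero _ hr.ne'
  -- key relation from the definition of n_c
  have hnc2 : n_c ^ 2 * (f r_c * r_c ^ m) = ((D:ℝ) - 2) * μ ^ 2 := by
    rw [hn, div_pow, mul_pow, sq_abs, Real.sq_sqrt (by positivity),
      hm, mul_comm 2 (D-2), pow_mul]
    field_simp
  have hμ2 : μ ^ 2 = f r_c * n_c ^ 2 * r_c ^ m / ((D:ℝ) - 2) := by
    rw [eq_div_iff hd2.ne']
    linarith [hnc2]
  -- powers of n_c
  set q : ℝ := n_c ^ s with hq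
  have hqpos : 0 < q := Real.rpow_pos_of_pos hncpos s
  have hp1 : n_c ^ (s - 1) = q / n_c := by
    rw [hq, Real.rpow_sub hncpos, Real.rpow_one]
  have hp2 : n_c ^ (s - 2) = q / n_c ^ 2 := by
    rw [hq, Real.rpow_sub hncpos, show (2:ℝ) = ((2:ℕ):ℝ) by norm_num,
      Real.rpow_natCast]
  have hp3 : n_c ^ (s - 3) = q / n_c ^ 3 := by
    rw [hq, Real.rpow_sub hncpos, show (3:ℝ) = ((3:ℕ):ℝ) by norm_num,
      Real.rpow_natCast]
  have hp4 : n_c ^ (s - 4) = q / n_c ^ 4 := by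
    rw [hq, Real.rpow_sub hncpos, show (4:ℝ) = ((4:ℕ):ℝ) by norm_num,
      Real.rpow_natCast]
  -- F as an explicit function of n (for n > 0)
  have hFeq : ∀ r n : ℝ, 0 < n →
      F r n = c ^ 2 * f r * n ^ s + c ^ 2 * (μ ^ 2 * ((r ^ m:ℝ))⁻¹) * n ^ (s - 2) := by
    intro r n hn0
    rw [hF, hh]
    have e1 : (k * γ / (γ - 1) * n ^ (γ - 1)) ^ 2 = c ^ 2 * n ^ s := by
      rw [mul_pow]
      congr 1
      rw [← Real.rpow_natCast (n ^ (γ - 1)) 2, ← Real.rpow_mul hn0.le]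
      norm_num [hs, mul_comm]
    have e2 : n ^ (s - 2) = n ^ s / n ^ 2 := by
      rw [Real.rpow_sub hn0, show (2:ℝ) = ((2:ℕ):ℝ) by norm_num, Real.rpow_natCast]
    rw [e1, e2, div_eq_mul_inv, div_eq_mul_inv, mul_inv]
    ring
  -- derivative in n
  have hdn : ∀ r n : ℝ, 0 < n →
      HasDerivAt (fun n => F r n)
        (c ^ 2 * f r * (s * n ^ (s - 1)) +
          c ^ 2 * (μ ^ 2 * ((r ^ m:ℝ))⁻¹) * ((s - 2) * n ^ (s - 3))) n := by
    intro r n hn0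
    have h1 : HasDerivAt (fun x : ℝ => x ^ s) (s * n ^ (s - 1)) n :=
      Real.hasDerivAt_rpow_const (Or.inl hn0.ne')
    have h2 : HasDerivAt (fun x : ℝ => x ^ (s - 2)) ((s - 2) * n ^ (s - 2 - 1)) n :=
      Real.hasDerivAt_rpow_const (Or.inl hn0.ne')
    rw [show s - 2 - 1 = s - 3 by ring] at h2
    have := (h1.const_mul (c ^ 2 * f r)).add (h2.const_mul (c ^ 2 * (μ ^ 2 * ((r ^ m:ℝ))⁻¹)))
    refine this.congr_of_eventuallyEq ?_
    filter_upwards [eventually_gt_nhds hn0] with x hx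
    exact hFeq r x hx
  have derivn : ∀ r : ℝ, deriv (fun n => F r n) n_c =
      c ^ 2 * f r * (s * n_c ^ (s - 1)) +
        c ^ 2 * (μ ^ 2 * ((r ^ m:ℝ))⁻¹) * ((s - 2) * n_c ^ (s - 3)) :=
    fun r => (hdn r n_c hncpos).deriv
  -- differentiability of f near r_c
  have hfr1 : DifferentiableAt ℝ f r_c := hfd.differentiableAt (by norm_num)
  obtain ⟨u, huo, hru, hcd0⟩ := hfd.contDiffOn' (le_refl 2) (by simp)
  have hcd : ContDiffOn ℝ 2 f u := by simpa using hcd0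
  have hcd' : ContDiffOn ℝ (1 + 1) f u := by norm_num at hcd ⊢; exact hcd
  have hsplit := (contDiffOn_succ_iff_deriv_of_isOpen huo).mp hcd'
  have hdiff : DifferentiableOn ℝ f u := hsplit.1
  have hcd1 : ContDiffOn ℝ 1 (deriv f) u := hsplit.2.2
  have hfev : ∀ᶠ r in nhds r_c, DifferentiableAt ℝ f r := by
    filter_upwards [huo.mem_nhds hru] with x hx
    exact (hdiff x hx).differentiableAt (huo.mem_nhds hx)
  have hd2f : DifferentiableAt ℝ (deriv f) r_c :=
    ((hcd1.differentiableOn one_ne_zero) r_c hru).differentiableAt (huo.mem_nhds hru)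
  -- zpow helpers
  have hz1 : (r_c:ℝ) ^ (-(m:ℤ) - 1) = (r_c ^ (m + 1))⁻¹ := by
    rw [show -(m:ℤ) - 1 = -((m + 1:ℕ):ℤ) by push_cast; ring, zpow_neg, zpow_natCast]
  have hz2 : (r_c:ℝ) ^ (-(m:ℤ) - 1 - 1) = (r_c ^ (m + 2))⁻¹ := by
    rw [show -(m:ℤ) - 1 - 1 = -((m + 2:ℕ):ℤ) by push_cast; ring, zpow_neg, zpow_natCast]
  -- the entry A = ∂²F/∂r∂n
  have hA : deriv (fun r => deriv (fun n => F r n) n_c) r_c =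
      c ^ 2 * (s * n_c ^ (s - 1)) * deriv f r_c +
        c ^ 2 * μ ^ 2 * ((s - 2) * n_c ^ (s - 3)) * (-(m:ℝ) * (r_c ^ (m + 1))⁻¹) := by
    have hfun : (fun r => deriv (fun n => F r n) n_c) =
        fun r => c ^ 2 * (s * n_c ^ (s - 1)) * f r +
          c ^ 2 * μ ^ 2 * ((s - 2) * n_c ^ (s - 3)) * r ^ (-(m:ℤ)) := by
      funext r
      rw [derivn r, zpow_neg, zpow_natCast]
      ring
    rw [hfun]
    have hzp := hasDerivAt_zpow (-(m:ℤ)) r_c (Or.inl hr.ne')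
    have := (hfr1.hasDerivAt.const_mul (c ^ 2 * (s * n_c ^ (s - 1)))).add
      (hzp.const_mul (c ^ 2 * μ ^ 2 * ((s - 2) * n_c ^ (s - 3))))
    simp only [Pi.add_def] at this
    rw [this.deriv, hz1]
    push_cast
    ring
  -- the entry B = ∂²F/∂n² at r_c
  have hB : deriv (deriv (fun n => F r_c n)) n_c =
      c ^ 2 * f r_c * s * ((s - 1) * n_c ^ (s - 2)) +
        c ^ 2 * (μ ^ 2 * ((r_c ^ m:ℝ))⁻¹) * (s - 2) * ((s - 3) * n_c ^ (s - 4)) := by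
    have hBev : deriv (fun n => F r_c n) =ᶠ[nhds n_c]
        fun n => c ^ 2 * f r_c * s * n ^ (s - 1) +
          c ^ 2 * (μ ^ 2 * ((r_c ^ m:ℝ))⁻¹) * (s - 2) * n ^ (s - 3) := by
      filter_upwards [eventually_gt_nhds hncpos] with x hx
      rw [(hdn r_c x hx).deriv]
      ring
    rw [hBev.deriv_eq]
    have h1 : HasDerivAt (fun x : ℝ => x ^ (s - 1)) ((s - 1) * n_c ^ (s - 1 - 1)) n_c :=
      Real.hasDerivAt_rpow_const (Or.inl hncpos.ne')
    have h2 : HasDerivAt (fun x : ℝ => x ^ (s - 3)) ((s - 3) * n_c ^ (s - 3 - 1)) n_c :=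
      Real.hasDerivAt_rpow_const (Or.inl hncpos.ne')
    rw [show s - 1 - 1 = s - 2 by ring] at h1
    rw [show s - 3 - 1 = s - 4 by ring] at h2
    exact ((h1.const_mul (c ^ 2 * f r_c * s)).add
      (h2.const_mul (c ^ 2 * (μ ^ 2 * ((r_c ^ m:ℝ))⁻¹) * (s - 2)))).deriv
  -- the entry C = ∂²F/∂r² at n_c
  have hQ : h n_c ^ 2 = c ^ 2 * q := by
    rw [hh, mul_pow, hq]
    congr 1
    rw [← Real.rpow_natCast (n_c ^ (γ - 1)) 2, ← Real.rpow_mul hncpos.le]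
    norm_num [hs, mul_comm]
  have hCfun : ∀ r : ℝ, F r n_c =
      (c ^ 2 * q) * f r + (c ^ 2 * q * (μ ^ 2 / n_c ^ 2)) * r ^ (-(m:ℤ)) := by
    intro r
    rw [hF, hQ, zpow_neg, zpow_natCast, div_eq_mul_inv, div_eq_mul_inv, mul_inv]
    ring
  have hC : deriv (deriv (fun r => F r n_c)) r_c =
      (c ^ 2 * q) * deriv (deriv f) r_c +
        (c ^ 2 * q * (μ ^ 2 / n_c ^ 2)) * ((m:ℝ) * ((m:ℝ) + 1) * (r_c ^ (m + 2))⁻¹) := by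
    have hCev : deriv (fun r => F r n_c) =ᶠ[nhds r_c]
        fun x => (c ^ 2 * q) * deriv f x +
          (c ^ 2 * q * (μ ^ 2 / n_c ^ 2) * (-(m:ℤ))) * x ^ (-(m:ℤ) - 1) := by
      filter_upwards [hfev, eventually_gt_nhds hr] with x hfx hx0
      have hzp := hasDerivAt_zpow (-(m:ℤ)) x (Or.inl hx0.ne')
      have hh' := (hfx.hasDerivAt.const_mul (c ^ 2 * q)).add
        (hzp.const_mul (c ^ 2 * q * (μ ^ 2 / n_c ^ 2)))
      have := (hh'.congr_of_eventuallyEq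
        (Filter.Eventually.of_forall fun r => hCfun r)).deriv
      rw [this]
      push_cast
      ring
    rw [hCev.deriv_eq]
    have hzp := hasDerivAt_zpow (-(m:ℤ) - 1) r_c (Or.inl hr.ne')
    have := (hd2f.hasDerivAt.const_mul (c ^ 2 * q)).add
      (hzp.const_mul (c ^ 2 * q * (μ ^ 2 / n_c ^ 2) * (-(m:ℤ))))
    simp only [Pi.add_def] at this
    rw [this.deriv, hz2]
    push_cast
    ring
  -- the right-hand side second derivative
  have hz3 : ∀ x : ℝ, x ≠ 0 → (x:ℝ) ^ (-2:ℤ) = (x ^ 2)⁻¹ := by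
    intro x _
    rw [show (-2:ℤ) = -((2:ℕ):ℤ) by norm_num, zpow_neg, zpow_natCast]
  have hR : deriv (deriv (fun r => f r / r ^ 2)) r_c =
      deriv (deriv f) r_c / r_c ^ 2 - 4 * deriv f r_c / r_c ^ 3 + 6 * f r_c / r_c ^ 4 := by
    have hRev : deriv (fun r => f r / r ^ 2) =ᶠ[nhds r_c]
        fun x => deriv f x * x ^ (-2:ℤ) + f x * (-2 * x ^ (-3:ℤ)) := by
      filter_upwards [hfev, eventually_gt_nhds hr] with x hfx hx0
      have hzp : HasDerivAt (fun r : ℝ => r ^ (-2:ℤ)) ((-2:ℤ) * x ^ (-2 - 1:ℤ)) x :=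
        hasDerivAt_zpow (-2:ℤ) x (Or.inl hx0.ne')
      have hmul := hfx.hasDerivAt.mul hzp
      have heq : (fun r : ℝ => f r / r ^ 2) = fun r : ℝ => f r * r ^ (-2:ℤ) := by
        funext r
        rw [show (-2:ℤ) = -((2:ℕ):ℤ) by norm_num, zpow_neg, zpow_natCast, div_eq_mul_inv]
      simp only [Pi.mul_def] at hmul
      rw [heq, hmul.deriv]
      push_cast
      try norm_num
      try ring
    rw [hRev.deriv_eq]
    have hzp2 : HasDerivAt (fun r : ℝ => r ^ (-2:ℤ)) ((-2:ℤ) * r_c ^ (-2 - 1:ℤ)) r_c :=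
      hasDerivAt_zpow (-2:ℤ) r_c (Or.inl hr.ne')
    have hzp3 : HasDerivAt (fun r : ℝ => r ^ (-3:ℤ)) ((-3:ℤ) * r_c ^ (-3 - 1:ℤ)) r_c :=
      hasDerivAt_zpow (-3:ℤ) r_c (Or.inl hr.ne')
    have ht1 := hd2f.hasDerivAt.mul hzp2
    have ht2 := hfr1.hasDerivAt.mul (hzp3.const_mul (-2:ℝ))
    have := (ht1.add ht2).deriv
    simp only [Pi.add_def, Pi.mul_def] at this
    rw [this]
    have e2 : (r_c:ℝ) ^ (-2:ℤ) = (r_c ^ 2)⁻¹ := hz3 r_c hr.ne'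
    have e3 : (r_c:ℝ) ^ (-3:ℤ) = (r_c ^ 3)⁻¹ := by
      rw [show (-3:ℤ) = -((3:ℕ):ℤ) by norm_num, zpow_neg, zpow_natCast]
    have e4 : (r_c:ℝ) ^ (-2 - 1:ℤ) = (r_c ^ 3)⁻¹ := by
      rw [show (-2 - 1:ℤ) = -((3:ℕ):ℤ) by norm_num, zpow_neg, zpow_natCast]
    have e5 : (r_c:ℝ) ^ (-3 - 1:ℤ) = (r_c ^ 4)⁻¹ := by
      rw [show (-3 - 1:ℤ) = -((4:ℕ):ℤ) by norm_num, zpow_neg, zpow_natCast]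
    rw [e2, e3, e4, e5]
    push_cast
    field_simp
    ring
  -- relation from criticality
  have hX : f r_c = r_c * deriv f r_c / 2 := by linarith
  -- simplified entries
  have hA2 : deriv (fun r => deriv (fun n => F r n) n_c) r_c =
      2 * c ^ 2 * (q / n_c) * deriv f r_c := by
    rw [hA, hp1, hp3, hμ2, hsv, hmc, pow_succ, hX]
    field_simp
    ring
  have hB2 : deriv (deriv (fun n => F r_c n)) n_c =
      4 * c ^ 2 * f r_c * q / (((D:ℝ) - 1) * n_c ^ 2) := by
    rw [hB, hp2, hp4, hμ2, hsv]
    field_simp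
    ring
  have hC2 : deriv (deriv (fun r => F r n_c)) r_c =
      c ^ 2 * q * (deriv (deriv f) r_c + 2 * (2 * (D:ℝ) - 3) * f r_c / r_c ^ 2) := by
    rw [hC, hμ2, hmc, show m + 2 = m + 1 + 1 by ring, pow_succ, pow_succ]
    field_simp
    ring
  -- determinant
  have hdet : M.det =
      (4 * c ^ 4 * q ^ 2 * f r_c / (((D:ℝ) - 1) * n_c ^ 2)) *
        (deriv (deriv f) r_c - 2 * f r_c / r_c ^ 2) := by
    rw [hM, Matrix.det_fin_two_of, hA2, hB2, hC2, hX]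
    field_simp
    ring
  have hR2 : deriv (deriv (fun r => f r / r ^ 2)) r_c =
      (deriv (deriv f) r_c - 2 * f r_c / r_c ^ 2) / r_c ^ 2 := by
    rw [hR, hX]
    field_simp
    ring
  rw [hdet, hR2]
  have hK : 0 < 4 * c ^ 4 * q ^ 2 * f r_c / (((D:ℝ) - 1) * n_c ^ 2) := by positivity
  constructor
  · intro hlt
    have hT : deriv (deriv f) r_c - 2 * f r_c / r_c ^ 2 < 0 :=
      neg_of_mul_neg_right hlt hK.le
    exact div_neg_of_neg_of_pos hT (by positivity)
  · intro hlt
    have hT : deriv (deriv f) r_c - 2 * f r_c / r_c ^ 2 < 0 := by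
      have hrp : (0:ℝ) < r_c ^ 2 := by positivity
      have := mul_lt_mul_of_pos_right hlt hrp
      rw [div_mul_cancel₀ _ hrp.ne', zero_mul] at this
      exact this
    exact mul_neg_of_pos_of_neg hK hT
end

section
/- Let f : ℝ → ℝ be positive and twice differentiable at r_c > 0 with r_c f'(r_c) = 2 f(r_c). Define 𝓕(r) = v_s²·(1 + 2(D-2)·f(r)/(r f'(r))) - 1 with constant v_s² = γ - 1, γ = D/(D-1), D ≥ 3. Then 𝓕'(r_c) = -2(γ-1)(D-2)·r_c·f(r_c)·f'(r_c)⁻²·(f r⁻²)''(r_c); in particular 𝓕'(r_c) and (f r⁻²)''(r_c) have opposite signs. -/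
/-- At a critical point r_c (where r_c f'(r_c) = 2 f(r_c)), the classifying function
𝓕(r) = v_s²(1 + 2(D-2) f/(r f')) - 1 satisfies
𝓕'(r_c) = -2(γ-1)(D-2) r_c f(r_c) f'(r_c)⁻² (f r⁻²)''(r_c);
in particular 𝓕'(r_c) and (f r⁻²)''(r_c) have opposite signs. -/
theorem classifying_function_deriv (D : ℕ) (hD : 3 ≤ D) (γ : ℝ)
    (hγ : γ = (D : ℝ) / ((D : ℝ) - 1))
    (f : ℝ → ℝ) (r_c : ℝ) (hr : 0 < r_c)
    (hfd : ContDiffAt ℝ 2 f r_c) (hfpos : 0 < f r_c)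
    (hcrit : r_c * deriv f r_c = 2 * f r_c)
    (𝓕 : ℝ → ℝ)
    (h𝓕 : ∀ r, 𝓕 r = (γ - 1) * (1 + 2 * ((D : ℝ) - 2) * f r / (r * deriv f r)) - 1) :
    deriv 𝓕 r_c = -2 * (γ - 1) * ((D : ℝ) - 2) * r_c * f r_c * (deriv f r_c)⁻¹ ^ 2 *
        deriv (deriv (fun r => f r / r ^ 2)) r_c ∧
      (0 < deriv 𝓕 r_c ↔ deriv (deriv (fun r => f r / r ^ 2)) r_c < 0) ∧
      (deriv 𝓕 r_c < 0 ↔ 0 < deriv (deriv (fun r => f r / r ^ 2)) r_c) := by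
  have hDR : (3:ℝ) ≤ (D:ℝ) := by exact_mod_cast hD
  have hrc : r_c ≠ 0 := ne_of_gt hr
  have hf1 : DifferentiableAt ℝ f r_c := hfd.differentiableAt (by norm_num)
  have hf2 : DifferentiableAt ℝ (deriv f) r_c := by
    have h1 : ContDiffAt ℝ 1 (fderiv ℝ f) r_c := hfd.fderiv_right (by norm_num)
    have h2 := (h1.differentiableAt (by norm_num)).clm_apply (differentiableAt_const (1:ℝ))
    have h3 : (fun x => fderiv ℝ f x (1:ℝ)) = deriv f := by
      funext x; exact fderiv_apply_one_eq_deriv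
    rwa [h3] at h2
  have hfp : deriv f r_c ≠ 0 := by
    intro h; rw [h] at hcrit; nlinarith
  set f' := deriv f r_c with hf'def
  set f'' := deriv (deriv f) r_c with hf''def
  -- second derivative of g = f / r^2
  have hev : (deriv fun r => f r / r ^ 2) =ᶠ[nhds r_c]
      fun r => deriv f r / r ^ 2 - 2 * f r / r ^ 3 := by
    have h1 : ∀ᶠ r in nhds r_c, DifferentiableAt ℝ f r := by
      filter_upwards [hfd.eventually (by norm_num)] with r hr
      exact hr.differentiableAt (by norm_num)
    have h2 : ∀ᶠ r in nhds r_c, r ≠ 0 := eventually_ne_nhds hrc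
    filter_upwards [h1, h2] with r hdr hr0
    have : HasDerivAt (fun r => f r / r ^ 2)
        ((deriv f r * r ^ 2 - f r * (2 * r)) / (r ^ 2) ^ 2) r := by
      have := (hdr.hasDerivAt.div ((hasDerivAt_pow 2 r)) (pow_ne_zero 2 hr0))
      exact this.congr_deriv (by norm_num)
    rw [this.deriv]; field_simp
  have hg2 : deriv (deriv (fun r => f r / r ^ 2)) r_c =
      f'' / r_c ^ 2 - 4 * f' / r_c ^ 3 + 6 * f r_c / r_c ^ 4 := by
    rw [hev.deriv_eq]
    have h1 : HasDerivAt (fun r => deriv f r / r ^ 2)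
        ((f'' * r_c ^ 2 - f' * (2 * r_c)) / (r_c ^ 2) ^ 2) r_c := by
      exact (hf2.hasDerivAt.div (hasDerivAt_pow 2 r_c) (pow_ne_zero 2 hrc)).congr_deriv
        (by norm_num [hf''def, hf'def])
    have h2 : HasDerivAt (fun r => 2 * f r / r ^ 3)
        ((2 * f' * r_c ^ 3 - 2 * f r_c * (3 * r_c ^ 2)) / (r_c ^ 3) ^ 2) r_c := by
      have := ((hf1.hasDerivAt.const_mul 2).div (hasDerivAt_pow 3 r_c) (pow_ne_zero 3 hrc))
      exact this.congr_deriv (by norm_num [hf'def])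
    rw [HasDerivAt.deriv (f := fun r => deriv f r / r ^ 2 - 2 * f r / r ^ 3) (h1.sub h2)]
    field_simp
    ring
  -- derivative of 𝓕
  have hden : r_c * f' ≠ 0 := by rw [hcrit]; positivity
  have hF : deriv 𝓕 r_c = (γ - 1) * (2 * ((D:ℝ) - 2)) *
      ((f' * (r_c * f') - f r_c * (f' + r_c * f'')) / (r_c * f') ^ 2) := by
    have hq : HasDerivAt (fun r => f r / (r * deriv f r))
        ((f' * (r_c * f') - f r_c * (1 * f' + r_c * f'')) / (r_c * f') ^ 2) r_c :=
      hf1.hasDerivAt.div ((hasDerivAt_id r_c).mul hf2.hasDerivAt) hden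
    have hFr : HasDerivAt 𝓕 ((γ - 1) * (2 * ((D:ℝ) - 2)) *
        ((f' * (r_c * f') - f r_c * (1 * f' + r_c * f'')) / (r_c * f') ^ 2)) r_c := by
      have : HasDerivAt (fun r => (γ - 1) * (1 + 2 * ((D:ℝ) - 2) * f r / (r * deriv f r)) - 1)
          ((γ - 1) * (2 * ((D:ℝ) - 2) *
            ((f' * (r_c * f') - f r_c * (1 * f' + r_c * f'')) / (r_c * f') ^ 2))) r_c := by
        have h3 : HasDerivAt (fun r => 1 + 2 * ((D:ℝ) - 2) * f r / (r * deriv f r))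
            (2 * ((D:ℝ) - 2) *
              ((f' * (r_c * f') - f r_c * (1 * f' + r_c * f'')) / (r_c * f') ^ 2)) r_c := by
          have := (hq.const_mul (2 * ((D:ℝ) - 2))).const_add 1
          simpa [mul_div_assoc] using this
        exact (h3.const_mul (γ - 1)).sub_const 1
      have heq : 𝓕 = fun r => (γ - 1) * (1 + 2 * ((D:ℝ) - 2) * f r / (r * deriv f r)) - 1 :=
        funext h𝓕
      rw [heq]
      convert this using 1; ring
    exact hFr.deriv.trans (by ring_nf)
  -- main identity
  have key : deriv 𝓕 r_c = -2 * (γ - 1) * ((D : ℝ) - 2) * r_c * f r_c * (f')⁻¹ ^ 2 *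
      deriv (deriv (fun r => f r / r ^ 2)) r_c := by
    rw [hF, hg2]
    have h2f : f' = 2 * f r_c / r_c := by field_simp; linarith [hcrit]
    rw [h2f]
    have hfne : f r_c ≠ 0 := ne_of_gt hfpos
    field_simp
    ring
  have hγ1 : 0 < γ - 1 := by
    have h1 : (0:ℝ) < (D:ℝ) - 1 := by linarith
    have h2 : γ - 1 = 1 / ((D:ℝ) - 1) := by rw [hγ]; field_simp; ring
    rw [h2]; positivity
  have hC : -2 * (γ - 1) * ((D : ℝ) - 2) * r_c * f r_c * (f')⁻¹ ^ 2 < 0 := by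
    have h1 : 0 < (γ - 1) * (((D:ℝ) - 2) * (r_c * (f r_c * (f')⁻¹ ^ 2))) := by
      apply mul_pos hγ1
      apply mul_pos (by linarith)
      apply mul_pos hr
      apply mul_pos hfpos
      positivity
    nlinarith [h1]
  refine ⟨key, ?_, ?_⟩
  · rw [key]
    constructor
    · intro h
      rcases mul_pos_iff.mp h with ⟨h1, _⟩ | ⟨_, h2⟩
      · linarith
      · exact h2
    · intro h; exact mul_pos_of_neg_of_neg hC h
  · rw [key]
    constructor
    · intro h
      rcases mul_neg_iff.mp h with ⟨h1, _⟩ | ⟨_, h2⟩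
      · linarith
      · exact h2
    · intro h; exact mul_neg_of_neg_of_pos hC h
end

section
/- For the Schwarzschild metric function f(r) = 1 - 2M/r with M > 0 in D = 4, the unique r > 2M with (f(r)/r²)' = 0 is r = 3M, and at r = 3M one has (f r⁻²)'' < 0 (unstable photon sphere). Consequently, the sonic point of any physical transonic spherically symmetric ideal photon gas (γ = 4/3) accretion flow lies at radius r = 3M. -/
private lemma hderiv1 (M : ℝ) {r : ℝ} (hr : r ≠ 0) :
    HasDerivAt (fun s : ℝ => (1 - 2 * M / s) / s ^ 2) ((6 * M - 2 * r) / r ^ 4) r := by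
  have hu : HasDerivAt (fun s : ℝ => 1 - 2 * M / s) (2 * M / r ^ 2) r := by
    have h1 : HasDerivAt (fun s : ℝ => 2 * M * s⁻¹) (2 * M * (-(r ^ 2)⁻¹)) r :=
      (hasDerivAt_inv hr).const_mul (2 * M)
    have h2 := (hasDerivAt_const r (1:ℝ)).sub h1
    have he : (fun s : ℝ => 1 - 2 * M / s) = (fun s : ℝ => 1 - 2 * M * s⁻¹) := by
      funext s; rw [div_eq_mul_inv]
    rw [he, show 2 * M / r ^ 2 = 0 - 2 * M * (-(r ^ 2)⁻¹) by ring]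
    exact h2
  have hv : HasDerivAt (fun s : ℝ => s ^ 2) (2 * r) r := by
    simpa using (hasDerivAt_pow 2 r)
  have hv0 : r ^ 2 ≠ 0 := pow_ne_zero _ hr
  have := hu.div hv hv0
  refine HasDerivAt.congr_deriv this ?_
  field_simp
  ring

private lemma hderiv2 (M : ℝ) {r : ℝ} (hr : r ≠ 0) :
    HasDerivAt (fun s : ℝ => (6 * M - 2 * s) / s ^ 4) ((6 * r - 24 * M) / r ^ 5) r := by
  have hu : HasDerivAt (fun s : ℝ => 6 * M - 2 * s) (-2) r := by
    simpa using ((hasDerivAt_id r).const_mul 2).const_sub (6*M)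
  have hv : HasDerivAt (fun s : ℝ => s ^ 4) (4 * r ^ 3) r := by
    simpa using (hasDerivAt_pow 4 r)
  have hv0 : r ^ 4 ≠ 0 := pow_ne_zero _ hr
  have := hu.div hv hv0
  refine HasDerivAt.congr_deriv this ?_
  field_simp
  ring

/-- Schwarzschild (D = 4): the unique r > 2M with (f/r²)' = 0 is r = 3M, where the
photon sphere is unstable ((f r⁻²)'' < 0); consequently any sonic radius r_s > 2M,
i.e. any radius satisfying the photon gas (γ = 4/3, v_s² = 1/3) critical condition,
equals 3M. -/
theorem schwarzschild_photon_sphere_sonic_point (M : ℝ) (hM : 0 < M)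
    (f : ℝ → ℝ) (hf : ∀ r, f r = 1 - 2 * M / r) :
    (∀ r : ℝ, 2 * M < r → (deriv (fun s => f s / s ^ 2) r = 0 ↔ r = 3 * M)) ∧
    deriv (deriv (fun s => f s / s ^ 2)) (3 * M) < 0 ∧
    (∀ r_s : ℝ, 2 * M < r_s →
      (1 / 3 : ℝ) * (2 * 2 * f r_s + r_s * deriv f r_s) = r_s * deriv f r_s →
      r_s = 3 * M) := by
  have hfe : f = fun r => 1 - 2 * M / r := funext hf
  have hFeq : (fun s => f s / s ^ 2) = (fun s : ℝ => (1 - 2 * M / s) / s ^ 2) := by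
    funext s; rw [hf]
  have hd1 : ∀ r : ℝ, r ≠ 0 → deriv (fun s => f s / s ^ 2) r = (6 * M - 2 * r) / r ^ 4 := by
    intro r hr
    rw [hFeq]
    exact (hderiv1 M hr).deriv
  refine ⟨?_, ?_, ?_⟩
  · intro r hr
    have hr0 : r ≠ 0 := by nlinarith
    rw [hd1 r hr0]
    constructor
    · intro h
      have h4 : r ^ 4 ≠ 0 := pow_ne_zero _ hr0
      have : 6 * M - 2 * r = 0 := by
        field_simp at h; linarith [h]
      linarith
    · intro h
      rw [h, show 6 * M - 2 * (3 * M) = 0 by ring, zero_div]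
  · have h3M : (3 * M) ≠ 0 := by positivity
    have hev : deriv (fun s => f s / s ^ 2) =ᶠ[nhds (3 * M)]
        (fun s : ℝ => (6 * M - 2 * s) / s ^ 4) := by
      filter_upwards [compl_singleton_mem_nhds h3M] with s hs
      exact hd1 s hs
    rw [hev.deriv_eq, (hderiv2 M h3M).deriv]
    have : (6 * (3 * M) - 24 * M) / (3 * M) ^ 5 = -6 * M / (3 * M) ^ 5 := by ring_nf
    rw [this]
    apply div_neg_of_neg_of_pos
    · linarith
    · positivity
  · intro r_s hr hcond
    have hr0 : r_s ≠ 0 := by nlinarith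
    have hdf : deriv f r_s = 2 * M / r_s ^ 2 := by
      rw [hfe]
      have h1 : HasDerivAt (fun s : ℝ => 2 * M * s⁻¹) (2 * M * (-(r_s ^ 2)⁻¹)) r_s :=
        (hasDerivAt_inv hr0).const_mul (2 * M)
      have h2 := (hasDerivAt_const r_s (1:ℝ)).sub h1
      have he : (fun s : ℝ => 1 - 2 * M / s) = (fun s : ℝ => 1 - 2 * M * s⁻¹) := by
        funext s; rw [div_eq_mul_inv]
      rw [he, show (fun s : ℝ => 1 - 2 * M * s⁻¹) = ((fun _ => (1:ℝ)) - fun s => 2 * M * s⁻¹) from rfl, h2.deriv]; ring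
    rw [hdf, hf] at hcond
    have h2 : r_s ^ 2 ≠ 0 := pow_ne_zero _ hr0
    field_simp at hcond
    have key : r_s ^ 4 * (4 * r_s - 12 * M) = 0 := by linear_combination 2 * r_s ^ 4 * hcond
    have h4 : r_s ^ 4 ≠ 0 := pow_ne_zero _ hr0
    rcases mul_eq_zero.mp key with h | h
    · exact absurd h h4
    · linarith
end
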